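/- Let p and p* be real numbers. For every n ≥ 0 and every s ∈ ℂ, the polynomials q_n satisfy the recurrence 2·q_{n+1}(s) = (p* − p − 2s)·q_n(s) + (p* − s)·q_n(s+1) − (p + s)·q_n(s−1), with initial condition q_0(s) = 1. -/

import Mathlib

/-- `qpoly p ps n s` is `n!` times the `n`-th Taylor coefficient at `z = 0` of
`z ↦ (1 - z)^(p+s) * (1 + z)^(ps - s)` (principal branch powers). -/
noncomputable def qpoly (p ps : ℝ) (n : ℕ) (s : ℂ) : ℂ :=
  iteratedDeriv n (fun z : ℂ => (1 - z) ^ ((p : ℂ) + s) * (1 + z) ^ ((ps : ℂ) - s)) 0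

open Complex Metric Topology

/-- The basic function family. -/
noncomputable def Fq (p ps : ℝ) (s : ℂ) : ℂ → ℂ :=
  fun z => (1 - z) ^ ((p : ℂ) + s) * (1 + z) ^ ((ps : ℂ) - s)

lemma mem_slit1 {z : ℂ} (hz : z ∈ ball (0:ℂ) 1) : (1 - z) ∈ Complex.slitPlane := by
  left
  simp only [Complex.sub_re, Complex.one_re]
  have : |z.re| < 1 := lt_of_le_of_lt (Complex.abs_re_le_norm z) (by simpa using hz)
  linarith [abs_lt.mp this |>.2]

lemma mem_slit2 {z : ℂ} (hz : z ∈ ball (0:ℂ) 1) : (1 + z) ∈ Complex.slitPlane := by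
  left
  simp only [Complex.add_re, Complex.one_re]
  have : |z.re| < 1 := lt_of_le_of_lt (Complex.abs_re_le_norm z) (by simpa using hz)
  linarith [abs_lt.mp this |>.1]

lemma Fq_analytic (p ps : ℝ) (s : ℂ) : AnalyticOnNhd ℂ (Fq p ps s) (ball (0:ℂ) 1) := by
  apply AnalyticOnNhd.mul
  · exact (analyticOnNhd_const.sub analyticOnNhd_id).cpow analyticOnNhd_const
      fun z hz => mem_slit1 hz
  · exact (analyticOnNhd_const.add analyticOnNhd_id).cpow analyticOnNhd_const
      fun z hz => mem_slit2 hz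

lemma Fq_contDiffOn (p ps : ℝ) (s : ℂ) (n : ℕ) :
    ContDiffOn ℂ n (Fq p ps s) (ball (0:ℂ) 1) :=
  (Fq_analytic p ps s).contDiffOn (isOpen_ball.uniqueDiffOn)

lemma Fq_hasDerivAt (p ps : ℝ) (s : ℂ) {z : ℂ} (hz : z ∈ ball (0:ℂ) 1) :
    HasDerivAt (Fq p ps s)
      (((p : ℂ) + s) * (1 - z) ^ ((p : ℂ) + s - 1) * (-1) * (1 + z) ^ ((ps : ℂ) - s)
        + (1 - z) ^ ((p : ℂ) + s) * (((ps : ℂ) - s) * (1 + z) ^ ((ps : ℂ) - s - 1) * 1)) z := by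
  exact HasDerivAt.mul
    (((hasDerivAt_id z).const_sub 1).cpow_const (mem_slit1 hz))
    (((hasDerivAt_id z).const_add 1).cpow_const (mem_slit2 hz))

lemma Fq_deriv_eq (p ps : ℝ) (s : ℂ) {z : ℂ} (hz : z ∈ ball (0:ℂ) 1) :
    deriv (Fq p ps s) z =
      (1/2 : ℂ) * (((ps : ℂ) - (p : ℂ) - 2 * s) * Fq p ps s z
        + ((ps : ℂ) - s) * Fq p ps (s + 1) z - ((p : ℂ) + s) * Fq p ps (s - 1) z) := by
  rw [(Fq_hasDerivAt p ps s hz).deriv]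
  have hu : (1 - z) ≠ 0 := Complex.slitPlane_ne_zero (mem_slit1 hz)
  have hv : (1 + z) ≠ 0 := Complex.slitPlane_ne_zero (mem_slit2 hz)
  have eu : ∀ w : ℂ, (1 - z) ^ w = (1 - z) ^ (w - 1) * (1 - z) := by
    intro w
    conv_lhs => rw [show w = (w - 1) + 1 by ring]
    rw [Complex.cpow_add _ _ hu, Complex.cpow_one]
  have ev : ∀ w : ℂ, (1 + z) ^ w = (1 + z) ^ (w - 1) * (1 + z) := by
    intro w
    conv_lhs => rw [show w = (w - 1) + 1 by ring]
    rw [Complex.cpow_add _ _ hv, Complex.cpow_one]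
  simp only [Fq]
  rw [eu ((p:ℂ) + s), ev ((ps:ℂ) - s),
    show (p:ℂ) + (s + 1) = ((p:ℂ) + s - 1 + 1) + 1 by ring,
    show (ps:ℂ) - (s + 1) = (ps:ℂ) - s - 1 by ring,
    show (p:ℂ) + (s - 1) = (p:ℂ) + s - 1 by ring,
    show (ps:ℂ) - (s - 1) = ((ps:ℂ) - s - 1 + 1) + 1 by ring,
    Complex.cpow_add _ _ hu, Complex.cpow_add _ _ hu,
    Complex.cpow_add _ _ hv, Complex.cpow_add _ _ hv]
  simp only [Complex.cpow_one]
  ring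

lemma iteratedDerivWithin_ball_eq (n : ℕ) (g : ℂ → ℂ) :
    iteratedDerivWithin n g (ball (0:ℂ) 1) 0 = iteratedDeriv n g 0 := by
  rw [iteratedDerivWithin_eq_iteratedFDerivWithin,
    iteratedFDerivWithin_of_isOpen n isOpen_ball (by simp), iteratedDeriv_eq_iteratedFDeriv]

theorem qpoly_recurrence (p ps : ℝ) :
    (∀ n : ℕ, ∀ s : ℂ,
      2 * qpoly p ps (n + 1) s =
        ((ps : ℂ) - (p : ℂ) - 2 * s) * qpoly p ps n s
          + ((ps : ℂ) - s) * qpoly p ps n (s + 1)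
          - ((p : ℂ) + s) * qpoly p ps n (s - 1)) ∧
    (∀ s : ℂ, qpoly p ps 0 s = 1) := by
  have h0 : (0:ℂ) ∈ ball (0:ℂ) 1 := by simp
  have hU : UniqueDiffOn ℂ (ball (0:ℂ) 1) := isOpen_ball.uniqueDiffOn
  constructor
  · intro n s
    set c1 : ℂ := (ps:ℂ) - (p:ℂ) - 2 * s with hc1
    set c2 : ℂ := (ps:ℂ) - s with hc2
    set c3 : ℂ := (p:ℂ) + s with hc3
    have hq : ∀ m : ℕ, ∀ t : ℂ, qpoly p ps m t = iteratedDeriv m (Fq p ps t) 0 :=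
      fun _ _ => rfl
    have hE : deriv (Fq p ps s) =ᶠ[𝓝 (0:ℂ)]
        fun z => (1/2 : ℂ) * (c1 * Fq p ps s z + c2 * Fq p ps (s+1) z - c3 * Fq p ps (s-1) z) := by
      filter_upwards [isOpen_ball.mem_nhds h0] with z hz using Fq_deriv_eq p ps s hz
    have hA : ContDiffOn ℂ n (fun z => c1 * Fq p ps s z) (ball (0:ℂ) 1) :=
      contDiffOn_const.mul (Fq_contDiffOn p ps s n)
    have hB : ContDiffOn ℂ n (fun z => c2 * Fq p ps (s+1) z) (ball (0:ℂ) 1) :=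
      contDiffOn_const.mul (Fq_contDiffOn p ps (s+1) n)
    have hC : ContDiffOn ℂ n (fun z => c3 * Fq p ps (s-1) z) (ball (0:ℂ) 1) :=
      contDiffOn_const.mul (Fq_contDiffOn p ps (s-1) n)
    have key : qpoly p ps (n+1) s =
        (1/2 : ℂ) * (c1 * qpoly p ps n s + c2 * qpoly p ps n (s+1) - c3 * qpoly p ps n (s-1)) := by
      rw [hq (n+1) s, iteratedDeriv_succ', hE.iteratedDeriv_eq n,
        ← iteratedDerivWithin_ball_eq n,
        iteratedDerivWithin_const_mul h0 hU _ (((hA.add hB).sub hC) 0 h0)]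
      have hsplit : (fun z => c1 * Fq p ps s z + c2 * Fq p ps (s+1) z - c3 * Fq p ps (s-1) z)
          = (fun z => c1 * Fq p ps s z + c2 * Fq p ps (s+1) z)
            - (fun z => c3 * Fq p ps (s-1) z) := rfl
      have hsplit2 : (fun z => c1 * Fq p ps s z + c2 * Fq p ps (s+1) z)
          = (fun z => c1 * Fq p ps s z) + (fun z => c2 * Fq p ps (s+1) z) := rfl
      rw [hsplit, iteratedDerivWithin_sub h0 hU ((hA.add hB) 0 h0) (hC 0 h0), hsplit2,
        iteratedDerivWithin_add h0 hU (hA 0 h0) (hB 0 h0),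
        iteratedDerivWithin_const_mul h0 hU _ ((Fq_contDiffOn p ps s n) 0 h0),
        iteratedDerivWithin_const_mul h0 hU _ ((Fq_contDiffOn p ps (s+1) n) 0 h0),
        iteratedDerivWithin_const_mul h0 hU _ ((Fq_contDiffOn p ps (s-1) n) 0 h0),
        iteratedDerivWithin_ball_eq, iteratedDerivWithin_ball_eq, iteratedDerivWithin_ball_eq,
        ← hq n s, ← hq n (s+1), ← hq n (s-1)]
    rw [key]; ring
  · intro s
    simp [qpoly, iteratedDeriv_zero, Complex.one_cpow]
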